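/- Let λ be a finite Borel measure on X × X, where X is a compact metric space, and let μ be a σ-finite Borel measure on X such that (π₁)_*λ ≪ μ and (π₂)_*λ ≪ μ, where π₁, π₂ : X × X → X are the coordinate projections. Let θ : X × X → X × X be the flip map θ(x,y) = (y,x), and assume θ_*λ ≪ λ and λ ≪ θ_*λ. Let (λ_t^1) be a (π₁,μ)-disintegration of λ and (λ_t^2) a (π₂,μ)-disintegration of λ. Then for μ-a.e. t, λ_t^1 ≪ θ_*(λ_t^2) and θ_*(λ_t^2) ≪ λ_t^1. In particular, for μ-a.e. t, if λ_t^2 has an atom at (s,t) then λ_t^1 has an atom at (t,s). -/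

import Mathlib

open MeasureTheory ENNReal

/-- A `(T, μ)`-disintegration of a measure `ν` on `X`. -/
def IsDisintegration {X Y : Type*} [MeasurableSpace X] [MeasurableSpace Y]
    (ν : Measure X) (T : X → Y) (μ : Measure Y) (lam : Y → Measure X) : Prop :=
  (∀ᵐ t ∂μ, lam t ((T ⁻¹' {t})ᶜ) = 0) ∧
  (∀ f : X → ℝ≥0∞, Measurable f →
      AEMeasurable (fun t => ∫⁻ x, f x ∂(lam t)) μ) ∧
  (∀ f : X → ℝ≥0∞, Measurable f →
      ∫⁻ x, f x ∂ν = ∫⁻ t, ∫⁻ x, f x ∂(lam t) ∂μ)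


section Helpers

variable {Z Y : Type*} [MeasurableSpace Z] [MeasurableSpace Y]

lemma disint_apply_aemeasurable {ρ : Measure Z} {T : Z → Y} {μ : Measure Y}
    {lam : Y → Measure Z} (hd : IsDisintegration ρ T μ lam)
    {A : Set Z} (hA : MeasurableSet A) :
    AEMeasurable (fun t => lam t A) μ := by
  have := hd.2.1 (A.indicator 1) (measurable_one.indicator hA)
  simpa only [lintegral_indicator_one hA] using this

lemma disint_lintegral_eq {ρ : Measure Z} {T : Z → Y} {μ : Measure Y}
    {lam : Y → Measure Z} (hd : IsDisintegration ρ T μ lam)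
    {A : Set Z} (hA : MeasurableSet A) :
    ρ A = ∫⁻ t, lam t A ∂μ := by
  have := hd.2.2 (A.indicator 1) (measurable_one.indicator hA)
  simpa only [lintegral_indicator_one hA] using this

lemma disint_setLIntegral {ρ : Measure Z} {T : Z → Y} (hT : Measurable T) {μ : Measure Y}
    {lam : Y → Measure Z} (hd : IsDisintegration ρ T μ lam)
    {A : Set Z} (hA : MeasurableSet A) {B : Set Y} (hB : MeasurableSet B) :
    ∫⁻ t in B, lam t A ∂μ = ρ (A ∩ T ⁻¹' B) := by
  rw [disint_lintegral_eq hd (hA.inter (hT hB)), ← lintegral_indicator hB]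
  apply lintegral_congr_ae
  filter_upwards [hd.1] with t ht
  have key : ∀ S : Set Z, lam t S = lam t (S ∩ T ⁻¹' {t}) := by
    intro S
    refine le_antisymm ?_ (measure_mono Set.inter_subset_left)
    calc lam t S ≤ lam t ((S ∩ T ⁻¹' {t}) ∪ (T ⁻¹' {t})ᶜ) := by
          refine measure_mono fun x hx => ?_
          by_cases hxt : T x = t
          · exact Or.inl ⟨hx, hxt⟩
          · exact Or.inr hxt
      _ ≤ lam t (S ∩ T ⁻¹' {t}) + lam t ((T ⁻¹' {t})ᶜ) := measure_union_le _ _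
      _ = lam t (S ∩ T ⁻¹' {t}) := by rw [ht, add_zero]
  by_cases htB : t ∈ B
  · rw [Set.indicator_of_mem htB, key A, key (A ∩ T ⁻¹' B)]
    congr 1
    ext x
    simp only [Set.mem_inter_iff, Set.mem_preimage, Set.mem_singleton_iff]
    constructor
    · rintro ⟨hxA, hxt⟩; exact ⟨⟨hxA, hxt ▸ htB⟩, hxt⟩
    · rintro ⟨⟨hxA, _⟩, hxt⟩; exact ⟨hxA, hxt⟩
  · rw [Set.indicator_of_notMem htB, key (A ∩ T ⁻¹' B)]
    have hemp : A ∩ T ⁻¹' B ∩ T ⁻¹' {t} = ∅ := by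
      ext x
      simp only [Set.mem_inter_iff, Set.mem_preimage, Set.mem_singleton_iff,
        Set.mem_empty_iff_false, iff_false, not_and]
      rintro ⟨_, hxB⟩ hxt
      exact htB (hxt ▸ hxB)
    rw [hemp, measure_empty]

lemma disint_unique {ρ : Measure Z} [IsFiniteMeasure ρ] [MeasurableSpace.CountablyGenerated Z]
    {T : Z → Y} (hT : Measurable T) {μ : Measure Y} [SigmaFinite μ]
    {lam lam' : Y → Measure Z} (hd : IsDisintegration ρ T μ lam)
    (hd' : IsDisintegration ρ T μ lam') :
    ∀ᵐ t ∂μ, lam t = lam' t := by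
  classical
  set b := MeasurableSpace.countableGeneratingSet Z with hb
  set C : Set (Set Z) := (fun u => ⋂₀ u) '' {u | u.Finite ∧ u ⊆ b} with hC
  have hCc : C.Countable :=
    (Set.countable_setOf_finite_subset (MeasurableSpace.countable_countableGeneratingSet (α := Z))).image _
  have hCpi : IsPiSystem C := by
    rintro s ⟨u₁, ⟨hu₁f, hu₁⟩, rfl⟩ t ⟨u₂, ⟨hu₂f, hu₂⟩, rfl⟩ _
    exact ⟨u₁ ∪ u₂, ⟨hu₁f.union hu₂f, Set.union_subset hu₁ hu₂⟩, Set.sInter_union u₁ u₂⟩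
  have hCmeas : ∀ A ∈ C, MeasurableSet A := by
    rintro A ⟨u, ⟨huf, hub⟩, rfl⟩
    exact MeasurableSet.sInter huf.countable fun s hs =>
      MeasurableSpace.measurableSet_countableGeneratingSet (hub hs)
  have hCgen : MeasurableSpace.generateFrom C = (inferInstance : MeasurableSpace Z) := by
    refine le_antisymm (MeasurableSpace.generateFrom_le hCmeas) ?_
    rw [← MeasurableSpace.generateFrom_countableGeneratingSet (α := Z)]
    refine MeasurableSpace.generateFrom_mono fun s hs => ?_
    exact ⟨{s}, ⟨Set.finite_singleton s, Set.singleton_subset_iff.2 hs⟩, Set.sInter_singleton s⟩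
  have hAE : ∀ A : Set Z, MeasurableSet A → ∀ᵐ t ∂μ, lam t A = lam' t A := by
    intro A hA
    refine ae_eq_of_forall_setLIntegral_eq_of_sigmaFinite₀ (disint_apply_aemeasurable hd hA)
      (disint_apply_aemeasurable hd' hA) fun s hs _ => ?_
    rw [disint_setLIntegral hT hd hA hs, disint_setLIntegral hT hd' hA hs]
  have hfin : ∀ᵐ t ∂μ, lam t Set.univ < ∞ := by
    refine ae_lt_top' (disint_apply_aemeasurable hd MeasurableSet.univ) ?_
    rw [← disint_lintegral_eq hd MeasurableSet.univ]
    exact measure_ne_top ρ _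
  have hall : ∀ᵐ t ∂μ, ∀ A ∈ C, lam t A = lam' t A :=
    (ae_ball_iff hCc).2 fun A hA => hAE A (hCmeas A hA)
  filter_upwards [hall, hAE Set.univ MeasurableSet.univ, hfin] with t h1 h2 h3
  have : IsFiniteMeasure (lam t) := ⟨h3⟩
  exact MeasureTheory.ext_of_generate_finite C hCgen.symm hCpi h1 h2

end Helpers

theorem disintegration_flip_invariant
    {X : Type*} [MetricSpace X] [CompactSpace X]
    [MeasurableSpace X] [BorelSpace X]
    (ν : Measure (X × X)) [IsFiniteMeasure ν]
    (μ : Measure X) [SigmaFinite μ]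
    (habs₁ : ν.map Prod.fst ≪ μ) (habs₂ : ν.map Prod.snd ≪ μ)
    (hflip₁ : ν.map Prod.swap ≪ ν) (hflip₂ : ν ≪ ν.map Prod.swap)
    (lam₁ lam₂ : X → Measure (X × X))
    (hdis₁ : IsDisintegration ν Prod.fst μ lam₁)
    (hdis₂ : IsDisintegration ν Prod.snd μ lam₂) :
    ∀ᵐ t ∂μ,
      (lam₁ t ≪ (lam₂ t).map Prod.swap ∧ (lam₂ t).map Prod.swap ≪ lam₁ t) ∧
      ∀ s : X, 0 < lam₂ t {(s, t)} → 0 < lam₁ t {(t, s)} := by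
  have hswap : Measurable (Prod.swap : X × X → X × X) := measurable_swap
  set h : X × X → ℝ≥0∞ := (ν.map Prod.swap).rnDeriv ν with hh
  have hmeas_h : Measurable h := Measure.measurable_rnDeriv _ _
  have hwd : ν.withDensity h = ν.map Prod.swap := by
    haveI : IsFiniteMeasure (ν.map Prod.swap) := Measure.isFiniteMeasure_map ν Prod.swap
    haveI : (ν.map Prod.swap).HaveLebesgueDecomposition ν :=
      Measure.haveLebesgueDecomposition_of_sigmaFinite _ _
    exact Measure.withDensity_rnDeriv_eq (ν.map Prod.swap) ν hflip₁
  -- first disintegration of ν.map swap over fst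
  have hdisA : IsDisintegration (ν.map Prod.swap) Prod.fst μ
      (fun t => (lam₂ t).map Prod.swap) := by
    refine ⟨?_, ?_, ?_⟩
    · filter_upwards [hdis₂.1] with t ht
      rw [Measure.map_apply hswap
        (((measurableSet_singleton t).preimage measurable_fst).compl)]
      exact ht
    · intro f hf
      exact (hdis₂.2.1 (f ∘ Prod.swap) (hf.comp hswap)).congr
        (Filter.Eventually.of_forall fun t => (lintegral_map hf hswap).symm)
    · intro f hf
      rw [lintegral_map hf hswap, hdis₂.2.2 (fun a => f a.swap) (hf.comp hswap)]
      exact lintegral_congr fun t => (lintegral_map hf hswap).symm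
  -- second disintegration of ν.map swap over fst
  have hdisB : IsDisintegration (ν.map Prod.swap) Prod.fst μ
      (fun t => (lam₁ t).withDensity h) := by
    refine ⟨?_, ?_, ?_⟩
    · filter_upwards [hdis₁.1] with t ht
      rw [withDensity_apply _ (((measurableSet_singleton t).preimage measurable_fst).compl)]
      exact setLIntegral_measure_zero _ _ ht
    · intro f hf
      exact (hdis₁.2.1 (h * f) (hmeas_h.mul hf)).congr
        (Filter.Eventually.of_forall fun t =>
          (lintegral_withDensity_eq_lintegral_mul _ hmeas_h hf).symm)
    · intro f hf
      rw [← hwd, lintegral_withDensity_eq_lintegral_mul _ hmeas_h hf,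
        hdis₁.2.2 (h * f) (hmeas_h.mul hf)]
      exact lintegral_congr fun t =>
        (lintegral_withDensity_eq_lintegral_mul _ hmeas_h hf).symm
  have huniq : ∀ᵐ t ∂μ, (lam₂ t).map Prod.swap = (lam₁ t).withDensity h :=
    disint_unique measurable_fst hdisA hdisB
  -- the zero set of h is ν-null and lam₁ t-null a.e.
  set N : Set (X × X) := {x | h x = 0} with hN
  have hNmeas : MeasurableSet N := hmeas_h (measurableSet_singleton 0)
  have hνN : ν N = 0 := by
    refine hflip₂ ?_
    rw [← hwd, withDensity_apply _ hNmeas]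
    calc ∫⁻ x in N, h x ∂ν = ∫⁻ x in N, 0 ∂ν :=
          setLIntegral_congr_fun hNmeas (fun x hx => hx)
      _ = 0 := lintegral_zero
  have hlamN : ∀ᵐ t ∂μ, lam₁ t N = 0 := by
    have h0 : ∫⁻ t, lam₁ t N ∂μ = 0 := by
      rw [← disint_lintegral_eq hdis₁ hNmeas]; exact hνN
    exact (lintegral_eq_zero_iff' (disint_apply_aemeasurable hdis₁ hNmeas)).1 h0
  filter_upwards [huniq, hlamN] with t hteq htN
  have hac₁ : lam₁ t ≪ (lam₂ t).map Prod.swap := by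
    rw [hteq]
    refine withDensity_absolutelyContinuous' hmeas_h.aemeasurable ?_
    have heq : {x : X × X | ¬ h x ≠ 0} = N := by ext x; simp [N]
    rw [ae_iff, heq]
    exact htN
  have hac₂ : (lam₂ t).map Prod.swap ≪ lam₁ t := by
    rw [hteq]; exact withDensity_absolutelyContinuous _ _
  refine ⟨⟨hac₁, hac₂⟩, fun s hs => ?_⟩
  by_contra hpos
  have hz : lam₁ t {(t, s)} = 0 := by
    simpa using (not_lt.mp hpos)
  have : (lam₂ t).map Prod.swap {(t, s)} = 0 := hac₂ hz
  rw [Measure.map_apply hswap (measurableSet_singleton _)] at this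
  have hpre : (Prod.swap : X × X → X × X) ⁻¹' {(t, s)} = {(s, t)} := by
    ext ⟨a, b⟩
    simp [Prod.ext_iff, and_comm]
  rw [hpre] at this
  exact absurd this (ne_of_gt hs)
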